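/- Let G be a graph on n vertices with a perfect matching M, let k, l be integers, F ⊆ M, and let (G^F, w_F, k_F) be the weighted vertex cover instance defined by: G^F has vertex classes V₁^F = {v₁ : v ∈ V \ V(F)} and V₂^F = {v₂ : v ∈ V}, edges {v₁,v₂} for v ∈ V \ V(F) and copies {u_i,v_i} of each edge {u,v} ∈ E within each class; w_F(v) = k+1 for v ∈ V₁^F and 1 for v ∈ V₂^F; and k_F = (n/2 − |F|)(k+2) + k. Then G has an odd cycle transversal X with |X| ≤ k such that G − X has color classes (A,B) with |A| ≥ n/2 − l if and only if for some F ⊆ M with |F| ≤ l the graph G^F has a vertex cover of weight at most k_F. -/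

import Mathlib

def PerfM {V : Type*} (G : SimpleGraph V) (M : Set (Sym2 V)) : Prop :=
  M ⊆ G.edgeSet ∧ ∀ v : V, ∃! e, e ∈ M ∧ v ∈ e

/-- The graph `G^F` (with `F` a finite set of matching edges): left copies `v₁` for
`v ∉ V(F)`, right copies `v₂` for all `v`, edges `{v₁,v₂}` for `v ∉ V(F)`, and a copy
of each edge of `G` inside each class. -/
def GF {V : Type*} (G : SimpleGraph V) (F : Finset (Sym2 V)) :
    SimpleGraph ({v : V // ∀ e ∈ F, v ∉ e} ⊕ V) where
  Adj x y :=
    match x, y with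
    | Sum.inl a, Sum.inl b => G.Adj a.1 b.1
    | Sum.inl a, Sum.inr b => a.1 = b
    | Sum.inr a, Sum.inl b => b.1 = a
    | Sum.inr a, Sum.inr b => G.Adj a b
  symm := by
    constructor
    rintro (a | a) (b | b) h
    · exact h.symm
    · exact h
    · exact h
    · exact h.symm
  loopless := by
    constructor
    rintro (a | a) h
    · exact G.loopless.irrefl a.1 h
    · exact G.loopless.irrefl a h

lemma sym2_eq_of_mem {α : Type*} (e : Sym2 α) {u v x : α} (hu : u ∈ e) (hv : v ∈ e)
    (hx : x ∈ e) (hux : u ≠ x) (hvx : v ≠ x) : u = v := by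
  induction e using Sym2.ind with
  | _ a b =>
    rw [Sym2.mem_iff] at hu hv hx
    rcases hu with rfl|rfl <;> rcases hv with rfl|rfl <;> rcases hx with rfl|rfl <;> tauto

lemma adj_of_mem_edge {V : Type*} (G : SimpleGraph V) {e : Sym2 V} (he : e ∈ G.edgeSet)
    {u v : V} (hu : u ∈ e) (hv : v ∈ e) (huv : u ≠ v) : G.Adj u v := by
  induction e using Sym2.ind with
  | _ a b =>
    rw [Sym2.mem_iff] at hu hv
    rw [SimpleGraph.mem_edgeSet] at he
    rcases hu with rfl|rfl <;> rcases hv with rfl|rfl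
    · exact absurd rfl huv
    · exact he
    · exact he.symm
    · exact absurd rfl huv

lemma card_VS {V : Type*} [Fintype V] [DecidableEq V] (G : SimpleGraph V)
    (M : Finset (Sym2 V)) (hM : PerfM G ↑M) (S : Finset (Sym2 V)) (hS : S ⊆ M)
    [DecidablePred (fun v : V => ∃ e ∈ S, v ∈ e)] :
    (Finset.univ.filter (fun v : V => ∃ e ∈ S, v ∈ e)).card = 2 * S.card := by
  classical
  have hbu : Finset.univ.filter (fun v : V => ∃ e ∈ S, v ∈ e)
      = S.biUnion (fun e => Finset.univ.filter (· ∈ e)) := by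
    ext v; simp
  have h2 : ∀ e ∈ S, (Finset.univ.filter (· ∈ e)).card = 2 := by
    intro e he
    have heG : e ∈ G.edgeSet := hM.1 (hS he)
    induction e using Sym2.ind with
    | _ a b =>
      have hab : a ≠ b := (G.mem_edgeSet.mp heG).ne
      have : Finset.univ.filter (· ∈ s(a,b)) = {a, b} := by
        ext v; simp [Sym2.mem_iff]
      rw [this, Finset.card_pair hab]
  have hdisj : ∀ e₁ ∈ S, ∀ e₂ ∈ S, e₁ ≠ e₂ →
      Disjoint (Finset.univ.filter (· ∈ e₁)) (Finset.univ.filter (· ∈ e₂)) := by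
    intro e₁ h₁ e₂ h₂ hne
    rw [Finset.disjoint_left]
    intro v hv1 hv2
    simp only [Finset.mem_filter] at hv1 hv2
    obtain ⟨f, -, hu⟩ := hM.2 v
    exact hne ((hu e₁ ⟨hS h₁, hv1.2⟩).trans (hu e₂ ⟨hS h₂, hv2.2⟩).symm)
  rw [hbu, Finset.card_biUnion hdisj, Finset.sum_congr rfl h2, Finset.sum_const,
    smul_eq_mul, mul_comm]

lemma card_V_eq {V : Type*} [Fintype V] (G : SimpleGraph V)
    (M : Finset (Sym2 V)) (hM : PerfM G ↑M) : Fintype.card V = 2 * M.card := by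
  classical
  have h := card_VS G M hM M (le_refl M)
  have : Finset.univ.filter (fun v : V => ∃ e ∈ M, v ∈ e) = Finset.univ := by
    rw [Finset.filter_eq_self]
    intro v _
    obtain ⟨e, ⟨he, hv⟩, -⟩ := hM.2 v
    exact ⟨e, he, hv⟩
  rw [this, Finset.card_univ] at h
  exact h


/-- UB ↔ WVC: `G` has an odd cycle transversal `X` with `|X| ≤ k` and color classes
`(A,B)` of `G - X` with `|A| ≥ n/2 - l` iff for some `F ⊆ M` with `|F| ≤ l` the graph
`G^F` has a vertex cover of weight at most `k_F = (n/2 - |F|)(k+2) + k`, where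
vertices in the left class weigh `k+1` and those in the right class weigh `1`. -/
theorem stmt15 {V : Type*} [Fintype V] (G : SimpleGraph V)
    (M : Finset (Sym2 V)) (hM : PerfM G ↑M) (k l : ℕ) :
    (∃ X A B : Finset V,
        (∀ v : V, v ∈ A ∨ v ∈ B ∨ v ∈ X) ∧
        Disjoint A B ∧ Disjoint A X ∧ Disjoint B X ∧
        (∀ u ∈ A, ∀ v ∈ A, ¬ G.Adj u v) ∧ (∀ u ∈ B, ∀ v ∈ B, ¬ G.Adj u v) ∧
        X.card ≤ k ∧ Fintype.card V / 2 ≤ A.card + l) ↔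
    (∃ F : Finset (Sym2 V), F ⊆ M ∧ F.card ≤ l ∧
        ∃ C : Finset ({v : V // ∀ e ∈ F, v ∉ e} ⊕ V),
          (∀ x y, (GF G F).Adj x y → x ∈ C ∨ y ∈ C) ∧
          (∑ x ∈ C, Sum.elim (fun _ => k + 1) (fun _ => 1) x) ≤
            (Fintype.card V / 2 - F.card) * (k + 2) + k) := by
  classical
  have hn : Fintype.card V = 2 * M.card := card_V_eq G M hM
  have hn2 : Fintype.card V / 2 = M.card := by omega
  -- the matching-edge function
  set eV : V → Sym2 V := fun v => (hM.2 v).choose with heVdef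
  have heM : ∀ v, eV v ∈ M := fun v => (hM.2 v).choose_spec.1.1
  have hve : ∀ v, v ∈ eV v := fun v => (hM.2 v).choose_spec.1.2
  have huniq : ∀ (v : V) (e : Sym2 V), e ∈ M → v ∈ e → e = eV v := by
    intro v e he hv
    exact (hM.2 v).choose_spec.2 e ⟨he, hv⟩
  constructor
  · rintro ⟨X, A, B, hcov, hAB, hAX, hBX, hAind, hBind, hXk, hAl⟩
    set F : Finset (Sym2 V) := M.filter (fun e => ∀ a ∈ A, a ∉ e) with hFdef
    have hFM : F ⊆ M := Finset.filter_subset _ _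
    have hAnF : ∀ v ∈ A, ∀ e ∈ F, v ∉ e := by
      intro v hv e he hve'
      exact (Finset.mem_filter.mp he).2 v hv hve'
    -- A ↔ M \ F
    have hacard : A.card = (M \ F).card := by
      apply Finset.card_bij (fun v _ => eV v)
      · intro v hv
        rw [Finset.mem_sdiff]
        refine ⟨heM v, fun hF => hAnF v hv _ hF (hve v)⟩
      · intro u hu v hv hEq
        by_contra hne
        exact hAind u hu v hv (adj_of_mem_edge G (hM.1 (heM u)) (hve u)
          (hEq ▸ hve v) hne)
      · intro e he
        rw [Finset.mem_sdiff, hFdef, Finset.mem_filter] at he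
        have : ¬ ∀ a ∈ A, a ∉ e := fun h => he.2 ⟨he.1, h⟩
        push_neg at this
        obtain ⟨a, ha, hae⟩ := this
        exact ⟨a, ha, (huniq a e he.1 hae).symm⟩
    have hMF : (M \ F).card = M.card - F.card := by
      rw [Finset.card_sdiff_of_subset hFM]
    have hFcM : F.card ≤ M.card := Finset.card_le_card hFM
    have hm : Fintype.card V / 2 - F.card = A.card := by omega
    refine ⟨F, hFM, by omega, ?_⟩
    set C : Finset ({v : V // ∀ e ∈ F, v ∉ e} ⊕ V) :=
      Finset.univ.filter
        (Sum.elim (fun a => a.1 ∉ A) (fun v => v ∈ A ∨ v ∈ X)) with hCdef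
    have hCl : ∀ a : {v : V // ∀ e ∈ F, v ∉ e}, Sum.inl a ∈ C ↔ a.1 ∉ A := by
      intro a; simp [hCdef]
    have hCr : ∀ v : V, Sum.inr v ∈ C ↔ v ∈ A ∨ v ∈ X := by
      intro v; simp [hCdef]
    refine ⟨C, ?_, ?_⟩
    · rintro (a | a) (b | b) hadj
      · by_cases ha : a.1 ∈ A
        · by_cases hb : b.1 ∈ A
          · exact absurd hadj (hAind _ ha _ hb)
          · exact Or.inr ((hCl b).mpr hb)
        · exact Or.inl ((hCl a).mpr ha)
      · by_cases ha : a.1 ∈ A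
        · right; rw [hCr]; left; exact hadj ▸ ha
        · left; exact (hCl a).mpr ha
      · by_cases hb : b.1 ∈ A
        · left; rw [hCr]; left; exact hadj ▸ hb
        · right; exact (hCl b).mpr hb
      · by_cases ha : a ∈ A ∨ a ∈ X
        · exact Or.inl ((hCr a).mpr ha)
        · by_cases hb : b ∈ A ∨ b ∈ X
          · exact Or.inr ((hCr b).mpr hb)
          · push_neg at ha hb
            have ha' : a ∈ B := by rcases hcov a with h|h|h <;> tauto
            have hb' : b ∈ B := by rcases hcov b with h|h|h <;> tauto
            exact absurd hadj (hBind _ ha' _ hb')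
    · -- weight bound
      have hsum : (∑ x ∈ C, Sum.elim (fun _ => k + 1) (fun _ => 1) x)
          = (k+1) * C.toLeft.card + C.toRight.card := by
        conv_lhs => rw [← Finset.toLeft_disjSum_toRight (u := C)]
        rw [Finset.sum_sumElim, Finset.sum_const, Finset.sum_const,
          smul_eq_mul, smul_eq_mul, mul_one, mul_comm]
      -- left part injects into A
      have hEx : ∀ a : {v : V // ∀ e ∈ F, v ∉ e}, ∃ x, x ∈ A ∧ x ∈ eV a.1 := by
        intro a
        have hnF : eV a.1 ∉ F := fun hF => a.2 _ hF (hve a.1)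
        have : ¬ ∀ x ∈ A, x ∉ eV a.1 := by
          intro h
          exact hnF (Finset.mem_filter.mpr ⟨heM a.1, h⟩)
        push_neg at this
        exact this
      have hL : C.toLeft.card ≤ A.card := by
        apply Finset.card_le_card_of_injOn (fun a => (hEx a).choose)
        · intro a _
          exact (hEx a).choose_spec.1
        · intro a ha b hb hEq
          simp only [Finset.coe_filter, Finset.mem_coe, Finset.mem_toLeft] at ha hb
          rw [hCl] at ha hb
          have hEq' : (hEx a).choose = (hEx b).choose := hEq
          have hxa : (hEx a).choose ∈ A ∧ (hEx a).choose ∈ eV a.1 := (hEx a).choose_spec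
          have hxb : (hEx a).choose ∈ A ∧ (hEx a).choose ∈ eV b.1 := by
            rw [hEq']; exact (hEx b).choose_spec
          have hea : eV a.1 = eV (hEx a).choose := huniq _ _ (heM a.1) hxa.2
          have heb : eV b.1 = eV (hEx a).choose := huniq _ _ (heM b.1) hxb.2
          have h1 : a.1 ∈ eV (hEx a).choose := hea ▸ hve a.1
          have h2 : b.1 ∈ eV (hEx a).choose := heb ▸ hve b.1
          have : a.1 = b.1 := sym2_eq_of_mem (eV (hEx a).choose) h1 h2 (hve (hEx a).choose)
            (fun h => ha (h ▸ hxa.1)) (fun h => hb (h ▸ hxa.1))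
          exact Subtype.ext this
      have hR : C.toRight.card ≤ A.card + k := by
        have : C.toRight = A ∪ X := by
          ext v; rw [Finset.mem_toRight, hCr, Finset.mem_union]
        rw [this]
        calc (A ∪ X).card ≤ A.card + X.card := Finset.card_union_le _ _
          _ ≤ A.card + k := by omega
      calc (∑ x ∈ C, Sum.elim (fun _ => k + 1) (fun _ => 1) x)
          = (k+1) * C.toLeft.card + C.toRight.card := hsum
        _ ≤ (k+1) * A.card + (A.card + k) :=
            add_le_add (Nat.mul_le_mul_left _ hL) hR
        _ = A.card * (k+2) + k := by ring
        _ = (Fintype.card V / 2 - F.card) * (k + 2) + k := by rw [hm]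
  · rintro ⟨F, hFM, hFl, C, hcover, hw⟩
    set A : Finset V :=
      Finset.univ.filter (fun v => ∃ h : (∀ e ∈ F, v ∉ e), Sum.inl ⟨v, h⟩ ∉ C) with hAdef
    set B : Finset V := Finset.univ.filter (fun v => Sum.inr v ∉ C) with hBdef
    set X : Finset V := Finset.univ.filter (fun v => v ∉ A ∧ v ∉ B) with hXdef
    have hAmem : ∀ v, v ∈ A ↔ ∃ h : (∀ e ∈ F, v ∉ e), Sum.inl ⟨v, h⟩ ∉ C := by
      intro v; simp [hAdef]
    have hBmem : ∀ v, v ∈ B ↔ Sum.inr v ∉ C := by intro v; simp [hBdef]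
    have hXmem : ∀ v, v ∈ X ↔ v ∉ A ∧ v ∉ B := by intro v; simp [hXdef]
    have hAB : Disjoint A B := by
      rw [Finset.disjoint_left]
      intro v hva hvb
      rw [hAmem] at hva
      rw [hBmem] at hvb
      obtain ⟨h, hC⟩ := hva
      have hadj : (GF G F).Adj (Sum.inl ⟨v, h⟩) (Sum.inr v) := rfl
      rcases hcover _ _ hadj with h'|h' <;> tauto
    have hAind : ∀ u ∈ A, ∀ v ∈ A, ¬ G.Adj u v := by
      intro u hu v hv hadj
      rw [hAmem] at hu hv
      obtain ⟨h1, hC1⟩ := hu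
      obtain ⟨h2, hC2⟩ := hv
      have hadj' : (GF G F).Adj (Sum.inl ⟨u, h1⟩) (Sum.inl ⟨v, h2⟩) := hadj
      rcases hcover _ _ hadj' with h'|h' <;> tauto
    have hBind : ∀ u ∈ B, ∀ v ∈ B, ¬ G.Adj u v := by
      intro u hu v hv hadj
      rw [hBmem] at hu hv
      have hadj' : (GF G F).Adj (Sum.inr u) (Sum.inr v) := hadj
      rcases hcover _ _ hadj' with h'|h' <;> tauto
    -- counting
    have hsum : (∑ x ∈ C, Sum.elim (fun _ => k + 1) (fun _ => 1) x)
        = (k+1) * C.toLeft.card + C.toRight.card := by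
      conv_lhs => rw [← Finset.toLeft_disjSum_toRight (u := C)]
      rw [Finset.sum_sumElim, Finset.sum_const, Finset.sum_const,
        smul_eq_mul, smul_eq_mul, mul_one, mul_comm]
    have hFc : F.card ≤ M.card := Finset.card_le_card hFM
    set m : ℕ := M.card - F.card with hmdef
    have hwS : (k+1) * C.toLeft.card + C.toRight.card ≤ m * (k+2) + k := by
      rw [← hsum]
      calc (∑ x ∈ C, Sum.elim (fun _ => k + 1) (fun _ => 1) x)
          ≤ (Fintype.card V / 2 - F.card) * (k + 2) + k := hw
        _ = m * (k+2) + k := by rw [hn2]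
    -- cardinality of the left vertex type
    have ht : Fintype.card {v : V // ∀ e ∈ F, v ∉ e} = 2 * m := by
      rw [Fintype.card_subtype]
      have hco : Finset.univ.filter (fun v : V => ∀ e ∈ F, v ∉ e)
          = Finset.univ \ Finset.univ.filter (fun v : V => ∃ e ∈ F, v ∈ e) := by
        ext v
        simp only [Finset.mem_filter, Finset.mem_sdiff, Finset.mem_univ, true_and]
        push_neg
        rfl
      rw [hco, Finset.card_sdiff_of_subset (Finset.filter_subset _ _), Finset.card_univ,
        card_VS G M hM F hFM, hn]
      omega
    have hL : 2 * m ≤ C.toLeft.card + A.card := by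
      rw [← ht, ← Finset.card_univ]
      calc (Finset.univ : Finset {v : V // ∀ e ∈ F, v ∉ e}).card
          ≤ (C.toLeft ∪ Finset.univ.filter (fun a : {v : V // ∀ e ∈ F, v ∉ e} => a.1 ∈ A)).card := by
            apply Finset.card_le_card
            intro a _
            rw [Finset.mem_union, Finset.mem_toLeft, Finset.mem_filter]
            by_cases h : Sum.inl a ∈ C
            · left; exact h
            · right
              refine ⟨Finset.mem_univ _, ?_⟩
              rw [hAmem]
              exact ⟨a.2, by simpa using h⟩
        _ ≤ C.toLeft.card + (Finset.univ.filter (fun a : {v : V // ∀ e ∈ F, v ∉ e} => a.1 ∈ A)).card :=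
            Finset.card_union_le _ _
        _ ≤ C.toLeft.card + A.card := by
            apply Nat.add_le_add_left
            apply Finset.card_le_card_of_injOn (fun a => a.1)
            · intro a ha
              exact (Finset.mem_filter.mp ha).2
            · intro a _ b _ h
              exact Subtype.ext h
    have hRR : Fintype.card V ≤ C.toRight.card + B.card := by
      rw [← Finset.card_univ]
      calc (Finset.univ : Finset V).card ≤ (C.toRight ∪ B).card := by
            apply Finset.card_le_card
            intro v _
            rw [Finset.mem_union, Finset.mem_toRight]
            by_cases h : Sum.inr v ∈ C
            · left; exact h
            · right; rw [hBmem]; exact h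
        _ ≤ C.toRight.card + B.card := Finset.card_union_le _ _
    -- A injects into M \ F
    have haM : A.card ≤ m := by
      have : A.card ≤ (M \ F).card := by
        apply Finset.card_le_card_of_injOn eV
        · intro v hv
          rw [Finset.mem_coe, Finset.mem_sdiff]
          rw [Finset.mem_coe, hAmem] at hv
          obtain ⟨h, -⟩ := hv
          exact ⟨heM v, fun hF => h _ hF (hve v)⟩
        · intro u hu v hv hEq
          by_contra hne
          exact hAind u hu v hv (adj_of_mem_edge G (hM.1 (heM u)) (hve u)
            (hEq ▸ hve v) hne)
      rwa [Finset.card_sdiff_of_subset hFM] at this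
    -- partition counting
    have hpart : A.card + B.card + X.card = Fintype.card V := by
      have hU : A ∪ B ∪ X = Finset.univ := by
        apply Finset.eq_univ_of_forall
        intro v
        rw [Finset.mem_union, Finset.mem_union, hXmem]
        tauto
      have hd1 : Disjoint (A ∪ B) X := by
        rw [Finset.disjoint_union_left]
        constructor <;> (rw [Finset.disjoint_left]; intro v hv hvX; rw [hXmem] at hvX; tauto)
      rw [← Finset.card_univ, ← hU, Finset.card_union_of_disjoint hd1,
        Finset.card_union_of_disjoint hAB]
    -- main inequality
    have hbig : 2 * (k * m) + 2 * m + Fintype.card V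
        ≤ (k * m) + 2 * m + k + (k * A.card) + A.card + B.card := by
      have h1 : (k+1) * (2 * m) + Fintype.card V
          ≤ (m * (k+2) + k) + ((k+1) * A.card + B.card) := by
        calc (k+1) * (2 * m) + Fintype.card V
            ≤ (k+1) * (C.toLeft.card + A.card) + (C.toRight.card + B.card) :=
              add_le_add (Nat.mul_le_mul_left _ hL) hRR
          _ = ((k+1) * C.toLeft.card + C.toRight.card) + ((k+1) * A.card + B.card) := by ring
          _ ≤ (m * (k+2) + k) + ((k+1) * A.card + B.card) := by
              exact Nat.add_le_add_right hwS _
      calc 2 * (k * m) + 2 * m + Fintype.card V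
          = (k+1) * (2 * m) + Fintype.card V := by ring
        _ ≤ (m * (k+2) + k) + ((k+1) * A.card + B.card) := h1
        _ = (k * m) + 2 * m + k + (k * A.card) + A.card + B.card := by ring
    have hkey : k * m + X.card ≤ k + k * A.card := by
      generalize hp : k * m = p at hbig ⊢
      generalize hq : k * A.card = q at hbig ⊢
      omega
    have hAm : A.card = m := by
      rcases eq_or_lt_of_le haM with heq | hlt
      · exact heq
      · exfalso
        have hq : k * A.card + k ≤ k * m := by
          have := Nat.mul_le_mul_left k (Nat.succ_le_of_lt hlt)
          rwa [Nat.mul_succ] at this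
        have hX0 : X.card = 0 := by
          generalize hgp : k * m = p at hkey hq
          generalize hgq : k * A.card = q at hkey hq
          omega
        have himg : (A.image eV).card < (M \ F).card := by
          calc (A.image eV).card ≤ A.card := Finset.card_image_le
            _ < m := hlt
            _ = (M \ F).card := by rw [Finset.card_sdiff_of_subset hFM]
        obtain ⟨e, heMF, henim⟩ : ∃ e ∈ M \ F, e ∉ A.image eV := by
          by_contra hcon
          push_neg at hcon
          exact absurd (Finset.card_le_card hcon) (not_le.mpr himg)
        rw [Finset.mem_sdiff] at heMF
        have heG : e ∈ G.edgeSet := hM.1 heMF.1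
        obtain ⟨⟨u, v⟩, rfl⟩ := Quot.exists_rep e
        have huv : G.Adj u v := heG
        have hu : u ∉ A := by
          intro hu
          exact henim (Finset.mem_image.mpr ⟨u, hu,
            (huniq u _ heMF.1 (by simp [Sym2.mem_iff])).symm⟩)
        have hv : v ∉ A := by
          intro hv
          exact henim (Finset.mem_image.mpr ⟨v, hv,
            (huniq v _ heMF.1 (by simp [Sym2.mem_iff])).symm⟩)
        have hXe : X = ∅ := Finset.card_eq_zero.mp hX0
        have hub : u ∈ B := by
          by_contra hub
          have : u ∈ X := (hXmem u).mpr ⟨hu, hub⟩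
          simp [hXe] at this
        have hvb : v ∈ B := by
          by_contra hvb
          have : v ∈ X := (hXmem v).mpr ⟨hv, hvb⟩
          simp [hXe] at this
        exact hBind u hub v hvb huv
    have hXk : X.card ≤ k := by
      rw [hAm] at hkey
      generalize hgp : k * m = p at hkey
      omega
    refine ⟨X, A, B, ?_, hAB, ?_, ?_, hAind, hBind, hXk, ?_⟩
    · intro v
      rw [hXmem]; tauto
    · rw [Finset.disjoint_left]; intro v hv hvX; rw [hXmem] at hvX; tauto
    · rw [Finset.disjoint_left]; intro v hv hvX; rw [hXmem] at hvX; tauto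
    · omega
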